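/- For formal pseudo-differential operators P and Q in one variable x, res_∂(P·Q*) = res_λ (P e^{xλ})·(Q e^{−xλ}), where res_∂ extracts the coefficient of ∂^{−1}, Q* is the formal adjoint, P e^{xλ} = (Σ a_i(x) λ^i) e^{xλ} is the symbol action on the exponential, and res_λ extracts the coefficient of λ^{−1} of the resulting Laurent series in λ. -/

import Mathlib

open scoped BigOperators

namespace PdoPaper

/-- Generalized binomial coefficient `C(i, k)` for an integer upper index `i`, as a rational:
`C(i,k) = i(i-1)⋯(i-k+1)/k!`. -/
noncomputable def zchoose (i : ℤ) (k : ℕ) : ℚ :=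
  (∏ j ∈ Finset.range k, ((i : ℚ) - (j : ℚ))) / (Nat.factorial k : ℚ)

/-- A formal pseudo-differential operator `P = Σ_{i ≤ bound} (coeff i) ∂^i` over a ring `R`:
a coefficient function `coeff : ℤ → R` vanishing above the bound. -/
structure PDO (R : Type) [CommRing R] [Algebra ℚ R] where
  coeff : ℤ → R
  bound : ℤ
  coeff_eq_zero : ∀ i : ℤ, bound < i → coeff i = 0

namespace PDO

variable {R : Type} [CommRing R] [Algebra ℚ R] (d : R → R)

/-- Multiplication of pseudo-differential operators, determined by the rule
`∂^i ∘ a = Σ_{k≥0} C(i,k) d^k(a) ∂^{i-k}` (`d` is the derivation of the coefficient ring).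
The coefficient of `∂^m` in `P·Q` is `Σ_{i,k} C(i,k) · (P.coeff i) · d^k(Q.coeff (m-i+k))`. -/
noncomputable def mul (P Q : PDO R) : PDO R where
  coeff m := ∑ i ∈ Finset.Icc (m - Q.bound) P.bound,
    ∑ k ∈ Finset.range ((Q.bound - m + i).toNat + 1),
      zchoose i k • (P.coeff i * d^[k] (Q.coeff (m - i + k)))
  bound := P.bound + Q.bound
  coeff_eq_zero := by
    intro m hm
    try dsimp only
    rw [Finset.Icc_eq_empty (by omega : ¬ (m - Q.bound ≤ P.bound))]
    simp

/-- The formal adjoint, determined by `(a ∂^i)* = (-∂)^i ∘ a`; its coefficient of `∂^m` is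
`Σ_{i ≥ m} (-1)^i C(i, i-m) d^{i-m}(P.coeff i)`. -/
noncomputable def adj (P : PDO R) : PDO R where
  coeff m := ∑ i ∈ Finset.Icc m P.bound,
      (((-1 : ℚ) ^ i) * zchoose i (i - m).toNat) • d^[(i - m).toNat] (P.coeff i)
  bound := P.bound
  coeff_eq_zero := by
    intro m hm
    try dsimp only
    rw [Finset.Icc_eq_empty (by omega : ¬ (m ≤ P.bound))]
    simp

/-- The residue of a pseudo-differential operator: the coefficient of `∂^{-1}`. -/
def res (P : PDO R) : R := P.coeff (-1)

/-- The pseudo-differential operator `∂^m` (`m ∈ ℤ`). -/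
def delPow (m : ℤ) : PDO R where
  coeff i := if i = m then 1 else 0
  bound := m
  coeff_eq_zero := by
    intro i h
    try dsimp only
    simp [show i ≠ m by omega]

/-- The multiplication operator by a function `f` (i.e. `f ∂^0`). -/
def ofFun (f : R) : PDO R where
  coeff i := if i = 0 then f else 0
  bound := 0
  coeff_eq_zero := by
    intro i h
    try dsimp only
    simp [show i ≠ 0 by omega]

/-- Difference of pseudo-differential operators. -/
def sub (P Q : PDO R) : PDO R where
  coeff i := P.coeff i - Q.coeff i
  bound := max P.bound Q.bound
  coeff_eq_zero := by
    intro i h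
    try dsimp only
    rw [P.coeff_eq_zero i ((le_max_left _ _).trans_lt h),
      Q.coeff_eq_zero i ((le_max_right _ _).trans_lt h), sub_self]

/-- `n`-th power of a pseudo-differential operator. -/
noncomputable def npow (P : PDO R) : ℕ → PDO R
  | 0 => delPow 0
  | n + 1 => mul d (npow P n) P

/-- The differential-operator (non-negative) part `P₊`. -/
def posPart (P : PDO R) : PDO R where
  coeff i := if 0 ≤ i then P.coeff i else 0
  bound := P.bound
  coeff_eq_zero := by
    intro i h
    try dsimp only
    rw [P.coeff_eq_zero i h]
    simp

/-- The strictly negative part `P₋`. -/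
def negPart (P : PDO R) : PDO R where
  coeff i := if i < 0 then P.coeff i else 0
  bound := -1
  coeff_eq_zero := by
    intro i h
    try dsimp only
    simp [show ¬ i < 0 by omega]

/-- Application of (the differential-operator part of) a pseudo-differential operator
to a function `f` of the coefficient ring: `(Σ_{i≥0} a_i ∂^i)(f) = Σ_{i≥0} a_i d^i(f)`. -/
noncomputable def app (P : PDO R) (f : R) : R :=
  ∑ i ∈ Finset.range (P.bound.toNat + 1), P.coeff (i : ℤ) * d^[i] f

end PDO

end PdoPaper


section AuxiliaryLemmas

namespace PdoPaper

lemma zchoose_zero (i : ℤ) : zchoose i 0 = 1 := by simp [zchoose]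

lemma zchoose_zero_succ (k : ℕ) : zchoose 0 (k+1) = 0 := by
  unfold zchoose
  rw [Finset.prod_eq_zero (Finset.mem_range.2 (Nat.succ_pos k))] <;> simp

lemma zchoose_pascal (x : ℤ) (k : ℕ) :
    zchoose x (k+1) = zchoose (x-1) k + zchoose (x-1) (k+1) := by
  unfold zchoose
  rw [Finset.prod_range_succ' (fun j => (x:ℚ) - j), Finset.prod_range_succ]
  have h4 : ∏ j ∈ Finset.range k, ((x:ℚ) - ((j:ℕ)+1 : ℕ)) =
      ∏ j ∈ Finset.range k, (((x-1 : ℤ):ℚ) - (j:ℚ)) := by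
    apply Finset.prod_congr rfl; intro j _; push_cast; ring
  rw [h4]
  have h2 : (k.factorial : ℚ) ≠ 0 := Nat.cast_ne_zero.2 k.factorial_ne_zero
  have h2' : ((k+1).factorial : ℚ) ≠ 0 := Nat.cast_ne_zero.2 (k+1).factorial_ne_zero
  have h1 : ((k+1).factorial : ℚ) = ((k:ℚ)+1) * k.factorial := by
    rw [Nat.factorial_succ]; push_cast; ring
  field_simp
  rw [h1]
  push_cast
  ring

lemma zchoose_vandermonde (N : ℕ) (x y : ℤ) :
    ∑ k ∈ Finset.range (N+1), zchoose x k * zchoose y (N-k) = zchoose (x+y) N := by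
  induction N generalizing x with
  | zero => simp [zchoose_zero]
  | succ N ih =>
    have key : ∀ x : ℤ,
        ∑ k ∈ Finset.range (N+2), zchoose (x+1) k * zchoose y (N+1-k)
        = zchoose (x+y) N + ∑ k ∈ Finset.range (N+2), zchoose x k * zchoose y (N+1-k) := by
      intro x
      rw [Finset.sum_range_succ' (fun k => zchoose (x+1) k * zchoose y (N+1-k)),
          Finset.sum_range_succ' (fun k => zchoose x k * zchoose y (N+1-k))]
      have : ∀ k ∈ Finset.range (N+1),
          zchoose (x+1) (k+1) * zchoose y (N+1-(k+1))
          = zchoose x k * zchoose y (N-k) + zchoose x (k+1) * zchoose y (N+1-(k+1)) := by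
        intro k _
        rw [show N+1-(k+1) = N-k from by omega, zchoose_pascal (x+1) k,
          add_sub_cancel_right, add_mul]
      rw [Finset.sum_congr rfl this, Finset.sum_add_distrib, ih x, zchoose_zero, zchoose_zero]
      ring
    induction x using Int.induction_on with
    | zero =>
      rw [Finset.sum_eq_single 0]
      · simp [zchoose_zero]
      · intro k hk hk0
        obtain ⟨k, rfl⟩ := Nat.exists_eq_succ_of_ne_zero hk0
        rw [zchoose_zero_succ, zero_mul]
      · intro h; exact absurd (Finset.mem_range.2 (by omega)) h
    | succ n ihn =>
      rw [key, ihn]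
      have := zchoose_pascal ((n:ℤ)+1+y) N
      rw [show (n:ℤ)+1+y-1 = n+y by ring] at this
      rw [this]
    | pred n ihn =>
      have h := key (-(n:ℤ)-1)
      rw [show -(n:ℤ)-1+1 = -n by ring, ihn] at h
      have h2 := zchoose_pascal (-(n:ℤ)+y) N
      rw [show -(n:ℤ)+y-1 = -n-1+y by ring] at h2
      linarith [h, h2]

lemma zchoose_pred_self (t : ℕ) : zchoose ((t:ℤ) - 1) t = if t = 0 then 1 else 0 := by
  cases t with
  | zero => simp [zchoose_zero]
  | succ t =>
    simp only [Nat.succ_ne_zero, if_false]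
    unfold zchoose
    rw [Finset.prod_eq_zero (Finset.mem_range.2 (Nat.lt_succ_self t))]
    · simp
    · push_cast; ring

section Derivation

variable {R : Type} [CommRing R] [Algebra ℚ R] {d : R → R}
  (hd_add : ∀ a b : R, d (a + b) = d a + d b)

include hd_add

lemma d_zero' : d 0 = 0 := by
  have := hd_add 0 0
  simp at this
  exact this

lemma d_nsmul (n : ℕ) (x : R) : d (n • x) = n • d x := by
  induction n with
  | zero => simpa using d_zero' hd_add
  | succ n ih => rw [succ_nsmul, succ_nsmul, hd_add, ih]

lemma d_neg (x : R) : d (-x) = - d x := by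
  have h := hd_add x (-x)
  rw [add_neg_cancel, d_zero' hd_add] at h
  linear_combination -h

lemma d_zsmul (z : ℤ) (x : R) : d (z • x) = z • d x := by
  cases z with
  | ofNat n => simpa using d_nsmul hd_add n x
  | negSucc n =>
    rw [Int.negSucc_eq, neg_smul, neg_smul, d_neg hd_add]
    rw [show ((n:ℤ)+1) = ((n+1 : ℕ) : ℤ) by push_cast; ring]
    rw [natCast_zsmul, natCast_zsmul, d_nsmul hd_add]

lemma d_qsmul (q : ℚ) (x : R) : d (q • x) = q • d x := by
  have h1 : (q.den : ℤ) • (q • x) = (q.num : ℤ) • x := by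
    rw [← Int.cast_smul_eq_zsmul ℚ, ← Int.cast_smul_eq_zsmul ℚ, smul_smul]
    congr 1
    push_cast
    rw [mul_comm, Rat.mul_den_eq_num]
  have h2 := d_zsmul hd_add (q.den : ℤ) (q • x)
  rw [h1, d_zsmul hd_add] at h2
  have h3 : (((q.den:ℤ) : ℚ)) • d (q • x) = (((q.num:ℤ) : ℚ)) • d x := by
    rw [Int.cast_smul_eq_zsmul ℚ, Int.cast_smul_eq_zsmul ℚ]
    exact h2.symm
  have h4 : ((q.den : ℚ)) ≠ 0 := by exact_mod_cast q.den_ne_zero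
  calc d (q • x) = ((q.den:ℚ)⁻¹ * (((q.den:ℤ)):ℚ)) • d (q • x) := by
        rw [show (((q.den:ℤ)):ℚ) = (q.den:ℚ) by push_cast; ring,
          inv_mul_cancel₀ h4, one_smul]
    _ = (q.den:ℚ)⁻¹ • ((((q.den:ℤ)):ℚ) • d (q • x)) := by rw [mul_smul]
    _ = (q.den:ℚ)⁻¹ • ((((q.num:ℤ)):ℚ) • d x) := by rw [h3]
    _ = ((q.den:ℚ)⁻¹ * (((q.num:ℤ)):ℚ)) • d x := by rw [mul_smul]
    _ = q • d x := by
        congr 1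
        push_cast
        rw [mul_comm, ← div_eq_mul_inv, Rat.num_div_den]

lemma iter_add (k : ℕ) (a b : R) : d^[k] (a + b) = d^[k] a + d^[k] b := by
  induction k generalizing a b with
  | zero => rfl
  | succ k ih => simp only [Function.iterate_succ_apply]; rw [hd_add, ih]

lemma iter_zero (k : ℕ) : d^[k] (0 : R) = 0 := by
  induction k with
  | zero => rfl
  | succ k ih => simp only [Function.iterate_succ_apply]; rw [d_zero' hd_add, ih]

lemma iter_qsmul (k : ℕ) (q : ℚ) (x : R) : d^[k] (q • x) = q • d^[k] x := by
  induction k generalizing x with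
  | zero => rfl
  | succ k ih => simp only [Function.iterate_succ_apply]; rw [d_qsmul hd_add, ih]

lemma iter_sum {ι : Type*} (k : ℕ) (s : Finset ι) (f : ι → R) :
    d^[k] (∑ j ∈ s, f j) = ∑ j ∈ s, d^[k] (f j) := by
  classical
  induction s using Finset.induction_on with
  | empty => simpa using iter_zero hd_add k
  | insert _ _ h ih => rw [Finset.sum_insert h, Finset.sum_insert h, iter_add hd_add, ih]

end Derivation

end PdoPaper

end AuxiliaryLemmas

open PdoPaper PdoPaper.PDO in
/-- Dickey's residue lemma: for pseudo-differential operators `P`, `Q`,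
`res_∂ (P · Q*) = res_λ (P e^{xλ})·(Q e^{-xλ})`.  Since `P e^{xλ} = (Σ_i a_i λ^i) e^{xλ}` and
`Q e^{-xλ} = (Σ_j b_j (-λ)^j) e^{-xλ}`, the right-hand side is the coefficient of `λ^{-1}` in
`(Σ_i a_i λ^i)(Σ_j b_j (-λ)^j)`, namely `Σ_i (-1)^{-1-i} a_i b_{-1-i}` (a finite sum). -/
theorem dickey_residue_lemma {R : Type} [CommRing R] [Algebra ℚ R] (d : R → R)
    (hd_add : ∀ a b : R, d (a + b) = d a + d b)
    (hd_mul : ∀ a b : R, d (a * b) = d a * b + a * d b)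
    (P Q : PDO R) :
    res (mul d P (adj d Q)) =
      ∑ i ∈ Finset.Icc (-1 - Q.bound) P.bound,
        ((-1 : ℚ) ^ (-1 - i)) • (P.coeff i * Q.coeff (-1 - i)) := by
  classical
  simp only [res, mul, adj]
  apply Finset.sum_congr rfl
  intro i hi
  rw [Finset.mem_Icc] at hi
  -- push the iterated derivative inside the inner sum
  have step1 : ∀ k, zchoose i k • (P.coeff i * d^[k]
        (∑ j ∈ Finset.Icc (-1 - i + (k:ℤ)) Q.bound,
          (((-1 : ℚ) ^ j) * zchoose j (j - (-1 - i + (k:ℤ))).toNat) •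
            d^[(j - (-1 - i + (k:ℤ))).toNat] (Q.coeff j)))
      = ∑ j ∈ Finset.Icc (-1 - i + (k:ℤ)) Q.bound,
          (zchoose i k * (((-1 : ℚ) ^ j) * zchoose j (j - (-1 - i + (k:ℤ))).toNat)) •
            (P.coeff i * d^[k + (j - (-1 - i + (k:ℤ))).toNat] (Q.coeff j)) := by
    intro k
    rw [iter_sum hd_add, Finset.mul_sum, Finset.smul_sum]
    apply Finset.sum_congr rfl
    intro j _
    rw [iter_qsmul hd_add, ← Function.iterate_add_apply, mul_smul_comm, smul_smul]
  calc (∑ k ∈ Finset.range ((Q.bound - -1 + i).toNat + 1),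
          zchoose i k • (P.coeff i * d^[k]
            (∑ j ∈ Finset.Icc (-1 - i + (k:ℤ)) Q.bound,
              (((-1 : ℚ) ^ j) * zchoose j (j - (-1 - i + (k:ℤ))).toNat) •
                d^[(j - (-1 - i + (k:ℤ))).toNat] (Q.coeff j))))
      = ∑ k ∈ Finset.range ((Q.bound - -1 + i).toNat + 1),
          ∑ j ∈ Finset.Icc (-1 - i + (k:ℤ)) Q.bound,
            (zchoose i k * (((-1 : ℚ) ^ j) * zchoose j (j - (-1 - i + (k:ℤ))).toNat)) •
              (P.coeff i * d^[k + (j - (-1 - i + (k:ℤ))).toNat] (Q.coeff j)) := by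
        exact Finset.sum_congr rfl (fun k _ => step1 k)
    _ = ∑ j ∈ Finset.Icc (-1 - i) Q.bound,
          ∑ k ∈ Finset.range ((j + 1 + i).toNat + 1),
            (zchoose i k * (((-1 : ℚ) ^ j) * zchoose j (j - (-1 - i + (k:ℤ))).toNat)) •
              (P.coeff i * d^[k + (j - (-1 - i + (k:ℤ))).toNat] (Q.coeff j)) := by
        apply Finset.sum_comm'
        intro k j
        simp only [Finset.mem_range, Finset.mem_Icc]
        omega
    _ = ((-1 : ℚ) ^ (-1 - i)) • (P.coeff i * Q.coeff (-1 - i)) := by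
        rw [Finset.sum_eq_single_of_mem (-1 - i)
          (Finset.mem_Icc.2 ⟨le_refl _, by omega⟩)]
        · rw [show ((-1:ℤ) - i + 1 + i).toNat + 1 = 1 from by omega, Finset.sum_range_one]
          rw [show ((-1:ℤ) - i - (-1 - i + ((0:ℕ):ℤ))).toNat = 0 from by omega]
          norm_num [zchoose_zero]
        · intro j hj hjne
          rw [Finset.mem_Icc] at hj
          set t : ℕ := (j + 1 + i).toNat with ht
          have htj : (t : ℤ) = j + 1 + i := by omega
          have ht1 : 1 ≤ t := by omega
          have hcong : ∀ k ∈ Finset.range (t + 1),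
              (zchoose i k * (((-1 : ℚ) ^ j) * zchoose j (j - (-1 - i + (k:ℤ))).toNat)) •
                (P.coeff i * d^[k + (j - (-1 - i + (k:ℤ))).toNat] (Q.coeff j))
              = (zchoose i k * zchoose j (t - k)) •
                  (((-1 : ℚ) ^ j) • (P.coeff i * d^[t] (Q.coeff j))) := by
            intro k hk
            rw [Finset.mem_range] at hk
            have h1 : (j - (-1 - i + (k:ℤ))).toNat = t - k := by omega
            have h2 : k + (t - k) = t := by omega
            rw [h1, h2, smul_smul]
            ring_nf
          rw [Finset.sum_congr rfl hcong, ← Finset.sum_smul,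
            zchoose_vandermonde t i j, show i + j = (t:ℤ) - 1 by omega,
            zchoose_pred_self, if_neg (by omega), zero_smul]
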